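/- (Liouville-space quantum speed limit, Eq. (F)) Let T > 0 and let t ↦ ρ_t, t ∈ [0,T], be a continuously differentiable family of nonzero Hermitian positive semidefinite d×d matrices satisfying ρ̇_t = 𝓛_t(ρ_t) for continuous linear maps 𝓛_t, and let ρ̃_t := ρ_t/‖ρ_t‖_HS. Then the Liouville-space angle between the endpoints is bounded by the time-integrated Liouvillian fluctuation: arccos( tr(ρ̃_0 ρ̃_T) ) ≤ ∫₀ᵀ Δ𝓛_t dt, where (Δ𝓛_t)² := ‖𝓛_t ρ̃_t‖²_HS − |⟨ρ̃_t, 𝓛_t ρ̃_t⟩|². -/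

import Mathlib

open Matrix
open scoped ComplexOrder

noncomputable section

/-- A density matrix: Hermitian, positive semidefinite, trace one. -/
def IsDensityMatrix {d : ℕ} (ρ : Matrix (Fin d) (Fin d) ℂ) : Prop :=
  ρ.IsHermitian ∧ ρ.PosSemidef ∧ ρ.trace = 1

/-- The real part `(ρ + ρᵀ)/2` of a matrix. -/
def reM {d : ℕ} (ρ : Matrix (Fin d) (Fin d) ℂ) : Matrix (Fin d) (Fin d) ℂ :=
  (2⁻¹ : ℂ) • (ρ + ρᵀ)

/-- The imaginary part `(ρ - ρᵀ)/(2i)` of a matrix. -/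
def imM {d : ℕ} (ρ : Matrix (Fin d) (Fin d) ℂ) : Matrix (Fin d) (Fin d) ℂ :=
  (2 * Complex.I)⁻¹ • (ρ - ρᵀ)

/-- The Hilbert–Schmidt norm `√(tr (Aᴴ A))`. -/
def hsNorm {d : ℕ} (A : Matrix (Fin d) (Fin d) ℂ) : ℝ :=
  Real.sqrt ((Aᴴ * A).trace.re)

/-- The square root of a positive semidefinite matrix (removed from Mathlib; old definition). -/
def Matrix.PosSemidef.sqrt {d : ℕ} {A : Matrix (Fin d) (Fin d) ℂ} (hA : A.PosSemidef) :
    Matrix (Fin d) (Fin d) ℂ :=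
  hA.1.eigenvectorUnitary.1 * diagonal ((↑) ∘ (√·) ∘ hA.1.eigenvalues) *
    (star hA.1.eigenvectorUnitary : Matrix (Fin d) (Fin d) ℂ)

/-- The trace norm `tr √(Aᴴ A)`. -/
def traceNorm {d : ℕ} (A : Matrix (Fin d) (Fin d) ℂ) : ℝ :=
  ((Matrix.posSemidef_conjTranspose_mul_self A).sqrt.trace).re

/-- Matrix logarithm via the continuous functional calculus (on Hermitian matrices). -/
def matLog {d : ℕ} (A : Matrix (Fin d) (Fin d) ℂ) : Matrix (Fin d) (Fin d) ℂ :=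
  cfc Real.log A

open scoped Classical in
/-- The positive semidefinite square root of a positive semidefinite matrix
(junk value `0` otherwise). -/
def msqrt {d : ℕ} (A : Matrix (Fin d) (Fin d) ℂ) : Matrix (Fin d) (Fin d) ℂ :=
  if h : A.PosSemidef then h.sqrt else 0

/-- The von Neumann entropy `S(ρ) = -tr(ρ log ρ)`. -/
def vnEntropy {d : ℕ} (ρ : Matrix (Fin d) (Fin d) ℂ) : ℝ :=
  -((ρ * matLog ρ).trace.re)

/-- The relative entropy of imaginarity `M_r(ρ) = S(Re ρ) - S(ρ)`. -/
def Mr {d : ℕ} (ρ : Matrix (Fin d) (Fin d) ℂ) : ℝ :=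
  vnEntropy (reM ρ) - vnEntropy ρ

/-- The root fidelity `tr √(√ρ σ √ρ)`. -/
def rootFid {d : ℕ} (ρ σ : Matrix (Fin d) (Fin d) ℂ) : ℝ :=
  ((msqrt (msqrt ρ * σ * msqrt ρ)).trace).re

/-- The geometric imaginarity `M_g(ρ) = (1 - √F(ρ, ρᵀ))/2`. -/
def Mg {d : ℕ} (ρ : Matrix (Fin d) (Fin d) ℂ) : ℝ :=
  (1 - rootFid ρ ρᵀ) / 2

/-- The Hilbert–Schmidt inner ℂ product `⟨A, B⟩ = tr(Aᴴ B)`. -/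
def hsInner {d : ℕ} (A B : Matrix (Fin d) (Fin d) ℂ) : ℂ :=
  (Aᴴ * B).trace

/-- The operator norm of a map on matrices induced by the Hilbert–Schmidt norm. -/
def opNormHS {d : ℕ} (L : Matrix (Fin d) (Fin d) ℂ → Matrix (Fin d) (Fin d) ℂ) : ℝ :=
  sSup {x : ℝ | ∃ ψ, hsNorm ψ = 1 ∧ x = hsNorm (L ψ)}

/-- The Liouville-space normalized vector `ρ̃ = ρ / ‖ρ‖_HS`. -/
def hsNormalize {d : ℕ} (A : Matrix (Fin d) (Fin d) ℂ) : Matrix (Fin d) (Fin d) ℂ :=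
  ((hsNorm A : ℂ))⁻¹ • A

/-- The fluctuation `Δ𝓛 = √(‖𝓛ψ‖² - |⟨ψ, 𝓛ψ⟩|²)` of a superoperator at a unit vector. -/
def fluct {d : ℕ} (L : Matrix (Fin d) (Fin d) ℂ → Matrix (Fin d) (Fin d) ℂ)
    (ψ : Matrix (Fin d) (Fin d) ℂ) : ℝ :=
  Real.sqrt ((hsNorm (L ψ)) ^ 2 - (‖hsInner ψ (L ψ)‖) ^ 2)


section Helpers

variable {E : Type*} [NormedAddCommGroup E] [InnerProductSpace ℂ E]

lemma re_inner_smul_smul (x x' : ℝ) (v v' : E) :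
    (inner ℂ (x • v) (x' • v') : ℂ).re = x * x' * (inner ℂ v v' : ℂ).re := by
  rw [show (x • v) = ((x : ℂ)) • v from (Complex.coe_smul x v).symm,
    show (x' • v') = ((x' : ℂ)) • v' from (Complex.coe_smul x' v').symm,
    inner_smul_left, inner_smul_right]
  simp [Complex.conj_ofReal, Complex.mul_re]
  ring

lemma re_inner_smul_right (x : ℝ) (v v' : E) :
    (inner ℂ v (x • v') : ℂ).re = x * (inner ℂ v v' : ℂ).re := by
  rw [show (x • v') = ((x : ℂ)) • v' from (Complex.coe_smul x v').symm, inner_smul_right]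
  simp [Complex.mul_re]

lemma re_inner_self (v : E) : (inner ℂ v v : ℂ).re = ‖v‖ ^ 2 := by
  simpa using inner_self_eq_norm_sq (𝕜 := ℂ) v

lemma abs_re_inner_le (v w : E) : |(inner ℂ v w : ℂ).re| ≤ ‖v‖ * ‖w‖ :=
  (Complex.abs_re_le_norm _).trans (by
    exact norm_inner_le_norm v w)

lemma re_inner_bound (u v w : E) (hu : ‖u‖ = 1) (hv : ‖v‖ = 1)
    (horth : (inner ℂ u w : ℂ).re = 0) :
    |(inner ℂ v w : ℂ).re| ≤ Real.sqrt (1 - ((inner ℂ v u : ℂ).re) ^ 2) * ‖w‖ := by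
  set g : ℝ := (inner ℂ v u : ℂ).re with hg
  have hz : ‖v - g • u‖ ^ 2 = 1 - g ^ 2 := by
    have := norm_sub_sq (𝕜 := ℂ) v (g • u)
    simp only [RCLike.re_to_complex] at this
    rw [this, re_inner_smul_right, hv, norm_smul, hu]
    simp [Real.norm_eq_abs, sq_abs]
    ring
  have h1 : (inner ℂ (v - g • u) w : ℂ).re = (inner ℂ v w : ℂ).re := by
    rw [inner_sub_left, Complex.sub_re]
    have : (inner ℂ (g • u) w : ℂ).re = g * (inner ℂ u w : ℂ).re := by
      rw [show (g • u) = ((g : ℂ)) • u from (Complex.coe_smul g u).symm, inner_smul_left]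
      simp [Complex.conj_ofReal, Complex.mul_re]
    rw [this, horth]
    ring
  have h2 := abs_re_inner_le (v - g • u) w
  rw [h1] at h2
  have h3 : ‖v - g • u‖ = Real.sqrt (1 - g ^ 2) := by
    rw [← hz, Real.sqrt_sq (norm_nonneg _)]
  rwa [h3] at h2

set_option maxHeartbeats 1000000 in
lemma curve_qsl (T : ℝ) (hT : 0 < T) (r r' : ℝ → E)
    (hderiv : ∀ t ∈ Set.Icc 0 T, HasDerivAt r (r' t) t)
    (hcont : ContinuousOn r' (Set.Icc 0 T))
    (hne : ∀ t ∈ Set.Icc 0 T, r t ≠ 0) :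
    Real.arccos ((inner ℂ (‖r 0‖⁻¹ • r 0) (‖r T‖⁻¹ • r T) : ℂ).re) ≤
      ∫ t in (0:ℝ)..T, Real.sqrt ((‖(‖r t‖⁻¹ • r' t : E)‖) ^ 2 -
        ((inner ℂ ((‖r t‖⁻¹ • r t : E)) ((‖r t‖⁻¹ • r' t : E)) : ℂ).re) ^ 2) := by
  set I := Set.Icc (0:ℝ) T with hIdef
  have hI0 : (0:ℝ) ∈ I := Set.left_mem_Icc.2 hT.le
  have hIT : T ∈ I := Set.right_mem_Icc.2 hT.le
  have hnz : ∀ t ∈ I, ‖r t‖ ≠ 0 := fun t ht => norm_ne_zero_iff.2 (hne t ht)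
  set u : ℝ → E := fun t => ‖r t‖⁻¹ • r t with hu_def
  set y : ℝ → E := fun t => ‖r t‖⁻¹ • r' t with hy_def
  set a : ℝ → ℝ := fun t => (inner ℂ (u t) (y t) : ℂ).re with ha_def
  set w : ℝ → E := fun t => y t - a t • u t with hw_def
  set g : ℝ → ℝ := fun t => (inner ℂ (u 0) (u t) : ℂ).re with hg_def
  set gd : ℝ → ℝ := fun t => (inner ℂ (u 0) (w t) : ℂ).re with hgd_def
  have hu_apply : ∀ t, u t = ‖r t‖⁻¹ • r t := fun t => rfl
  have hy_apply : ∀ t, y t = ‖r t‖⁻¹ • r' t := fun t => rfl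
  have hw_apply : ∀ t, w t = y t - a t • u t := fun t => rfl
  have ha_apply : ∀ t, (inner ℂ (u t) (y t) : ℂ).re = a t := fun t => rfl
  -- norms of u
  have hun : ∀ t ∈ I, ‖u t‖ = 1 := by
    intro t ht
    rw [hu_apply, norm_smul, Real.norm_eq_abs, abs_inv, abs_of_nonneg (norm_nonneg (r t))]
    exact inv_mul_cancel₀ (hnz t ht)
  -- a in raw terms
  have ha_eq : ∀ t, a t = (‖r t‖⁻¹ * ‖r t‖⁻¹) * (inner ℂ (r t) (r' t) : ℂ).re := by
    intro t; rw [← ha_apply, hu_apply, hy_apply]; exact re_inner_smul_smul _ _ _ _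
  -- derivative of the squared norm
  have hip : ∀ t ∈ I, HasDerivAt (fun s => ((inner ℂ (r s) (r s) : ℂ)).re)
      (2 * (inner ℂ (r t) (r' t) : ℂ).re) t := by
    intro t ht
    have h1 : HasDerivAt (fun s => (inner ℂ (r s) (r s) : ℂ))
        ((inner ℂ (r t) (r' t) : ℂ) + (inner ℂ (r' t) (r t) : ℂ)) t :=
      (hderiv t ht).inner ℂ (hderiv t ht)
    have h2 := (Complex.reCLM.hasFDerivAt).comp_hasDerivAt t h1
    have h3 : ((inner ℂ (r t) (r' t) : ℂ) + (inner ℂ (r' t) (r t) : ℂ)).re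
        = 2 * (inner ℂ (r t) (r' t) : ℂ).re := by
      rw [Complex.add_re, ← inner_conj_symm (r t) (r' t), Complex.conj_re]
      ring
    simpa [Function.comp_def, h3] using h2
  -- derivative of the norm
  have hn : ∀ t ∈ I, HasDerivAt (fun s => ‖r s‖)
      ((inner ℂ (r t) (r' t) : ℂ).re / ‖r t‖) t := by
    intro t ht
    have h0 : ((inner ℂ (r t) (r t) : ℂ)).re ≠ 0 := by
      rw [re_inner_self]
      have := hnz t ht
      positivity
    have h1 := (hip t ht).sqrt h0
    have heq : (fun s => Real.sqrt ((inner ℂ (r s) (r s) : ℂ).re)) = fun s => ‖r s‖ := by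
      funext s; rw [re_inner_self, Real.sqrt_sq (norm_nonneg _)]
    rw [heq] at h1
    have hval : 2 * (inner ℂ (r t) (r' t) : ℂ).re / (2 * Real.sqrt ((inner ℂ (r t) (r t) : ℂ).re))
        = (inner ℂ (r t) (r' t) : ℂ).re / ‖r t‖ := by
      rw [re_inner_self, Real.sqrt_sq (norm_nonneg _)]
      rw [mul_div_mul_left _ _ (two_ne_zero)]
    rwa [hval] at h1
  -- derivative of u
  have hu_deriv : ∀ t ∈ I, HasDerivAt u (w t) t := by
    intro t ht
    have hz := hnz t ht
    have hinv : HasDerivAt (fun s => ‖r s‖⁻¹)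
        (-((inner ℂ (r t) (r' t) : ℂ).re / ‖r t‖) / (‖r t‖) ^ 2) t :=
      (hn t ht).inv hz
    have hsmul := hinv.smul (hderiv t ht)
    have hkey : w t = ‖r t‖⁻¹ • r' t +
        (-((inner ℂ (r t) (r' t) : ℂ).re / ‖r t‖) / (‖r t‖) ^ 2) • r t := by
      rw [hw_apply, hy_apply, hu_apply, ha_eq]
      match_scalars
      · ring
      · field_simp
    rw [hkey]
    exact hsmul
  -- orthogonality
  have horth : ∀ t ∈ I, (inner ℂ (u t) (w t) : ℂ).re = 0 := by
    intro t ht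
    have h2 : (inner ℂ (u t) (a t • u t) : ℂ).re = a t * ‖u t‖ ^ 2 := by
      rw [re_inner_smul_right, re_inner_self]
    rw [hw_apply, inner_sub_right, Complex.sub_re, h2, hun t ht, ha_apply]
    ring
  -- norm of w
  have hw_sq : ∀ t ∈ I, ‖w t‖ ^ 2 = ‖y t‖ ^ 2 - (a t) ^ 2 := by
    intro t ht
    have hns := norm_sub_sq (𝕜 := ℂ) (y t) (a t • u t)
    simp only [RCLike.re_to_complex] at hns
    have h2 : (inner ℂ (y t) (a t • u t) : ℂ).re = a t * (inner ℂ (y t) (u t) : ℂ).re :=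
      re_inner_smul_right _ _ _
    have h3 : (inner ℂ (y t) (u t) : ℂ).re = a t := by
      rw [← inner_conj_symm (y t) (u t), Complex.conj_re, ha_apply]
    have h4 : ‖a t • u t‖ = |a t| := by
      rw [norm_smul, Real.norm_eq_abs, hun t ht, mul_one]
    rw [hw_apply, hns, h2, h3, h4, sq_abs]
    ring
  -- integrand equality
  have hinteg : ∀ t ∈ I, Real.sqrt (‖y t‖ ^ 2 - (a t) ^ 2) = ‖w t‖ := by
    intro t ht
    rw [← hw_sq t ht, Real.sqrt_sq (norm_nonneg _)]
  -- continuity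
  have hrC : ContinuousOn r I := fun t ht => (hderiv t ht).continuousAt.continuousWithinAt
  have hnC : ContinuousOn (fun t => ‖r t‖) I := hrC.norm
  have hninvC : ContinuousOn (fun t => ‖r t‖⁻¹) I := hnC.inv₀ hnz
  have huC : ContinuousOn u I := hninvC.smul hrC
  have hyC : ContinuousOn y I := hninvC.smul hcont
  have haC : ContinuousOn a I :=
    Complex.continuous_re.comp_continuousOn (huC.inner hyC)
  have hwC : ContinuousOn w I := hyC.sub (haC.smul huC)
  have hgC : ContinuousOn g I :=
    Complex.continuous_re.comp_continuousOn (continuousOn_const.inner huC)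
  have hgdC : ContinuousOn gd I :=
    Complex.continuous_re.comp_continuousOn (continuousOn_const.inner hwC)
  -- g facts
  have hg0 : g 0 = 1 := by
    have : (inner ℂ (u 0) (u 0) : ℂ).re = ‖u 0‖ ^ 2 := re_inner_self _
    rw [hg_def]
    simp only
    rw [this, hun 0 hI0, one_pow]
  have hgb : ∀ t ∈ I, |g t| ≤ 1 := by
    intro t ht
    have := abs_re_inner_le (u 0) (u t)
    rwa [hun 0 hI0, hun t ht, one_mul] at this
  have hg_deriv : ∀ t ∈ I, HasDerivAt g (gd t) t := by
    intro t ht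
    have h1 : HasDerivAt (fun s => (inner ℂ (u 0) (u s) : ℂ))
        ((inner ℂ (u 0) (w t) : ℂ) + (inner ℂ (0 : E) (u t) : ℂ)) t :=
      (hasDerivAt_const t (u 0)).inner ℂ (hu_deriv t ht)
    have h2 := (Complex.reCLM.hasFDerivAt).comp_hasDerivAt t h1
    simpa [Function.comp_def, inner_zero_left] using h2
  have hgd_bound : ∀ t ∈ I, |gd t| ≤ Real.sqrt (1 - (g t) ^ 2) * ‖w t‖ := fun t ht =>
    re_inner_bound (u t) (u 0) (w t) (hun t ht) (hun 0 hI0) (horth t ht)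
  -- reduce to ∫ ‖w t‖
  have hwint : IntervalIntegrable (fun t => ‖w t‖) MeasureTheory.volume 0 T := by
    apply ContinuousOn.intervalIntegrable
    rw [Set.uIcc_of_le hT.le]
    exact hwC.norm
  suffices h : Real.arccos (g T) ≤ ∫ t in (0:ℝ)..T, ‖w t‖ by
    have hRHS : (∫ t in (0:ℝ)..T, Real.sqrt (‖y t‖ ^ 2 - (a t) ^ 2))
        = ∫ t in (0:ℝ)..T, ‖w t‖ := by
      apply intervalIntegral.integral_congr
      intro t ht
      rw [Set.uIcc_of_le hT.le] at ht
      exact hinteg t ht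
    show Real.arccos (g T) ≤ ∫ t in (0:ℝ)..T, Real.sqrt (‖y t‖ ^ 2 - (a t) ^ 2)
    rw [hRHS]
    exact h
  -- the key bound for each c > 1
  have key : ∀ c : ℝ, 1 < c →
      Real.arcsin (1/c) - Real.arcsin (g T / c) ≤ ∫ t in (0:ℝ)..T, ‖w t‖ := by
    intro c hc
    have hc0 : (0:ℝ) < c := lt_trans one_pos hc
    have hcne : c ≠ 0 := ne_of_gt hc0
    set Hd : ℝ → ℝ := fun t => gd t / Real.sqrt (c ^ 2 - g t ^ 2) with hHd_def
    have hHd_apply : ∀ t, Hd t = gd t / Real.sqrt (c ^ 2 - g t ^ 2) := fun t => rfl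
    have hgsq : ∀ t ∈ I, g t ^ 2 ≤ 1 := by
      intro t ht
      nlinarith [sq_abs (g t), hgb t ht, abs_nonneg (g t)]
    have hsub_pos : ∀ t ∈ I, 0 < c ^ 2 - g t ^ 2 := by
      intro t ht
      nlinarith [hgsq t ht, hc]
    have hdivlt : ∀ t ∈ I, |g t / c| < 1 := by
      intro t ht
      rw [abs_div, abs_of_pos hc0, div_lt_one hc0]
      exact lt_of_le_of_lt (hgb t ht) hc
    have hsqrt_eq : ∀ t ∈ I, c * Real.sqrt (1 - (g t / c) ^ 2)
        = Real.sqrt (c ^ 2 - g t ^ 2) := by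
      intro t ht
      have h1 : c ^ 2 - g t ^ 2 = c ^ 2 * (1 - (g t / c) ^ 2) := by
        field_simp
      rw [h1, Real.sqrt_mul (sq_nonneg c), Real.sqrt_sq hc0.le]
    have hone_sub_pos : ∀ t ∈ I, 0 < 1 - (g t / c) ^ 2 := by
      intro t ht
      have h := hdivlt t ht
      have h2 := mul_self_lt_mul_self (abs_nonneg (g t / c)) h
      nlinarith [sq_abs (g t / c), pow_two (|g t / c|)]
    have hH : ∀ t ∈ I, HasDerivAt (fun s => Real.arcsin (g s / c)) (Hd t) t := by
      intro t ht
      have h1 : g t / c ≠ -1 := by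
        intro h; have := hdivlt t ht; rw [h] at this; norm_num at this
      have h2 : g t / c ≠ 1 := by
        intro h; have := hdivlt t ht; rw [h] at this; norm_num at this
      have h3 := (Real.hasDerivAt_arcsin h1 h2).comp t ((hg_deriv t ht).div_const c)
      have hs : Real.sqrt (1 - (g t / c) ^ 2) ≠ 0 :=
        ne_of_gt (Real.sqrt_pos.2 (hone_sub_pos t ht))
      have hval : (1 / Real.sqrt (1 - (g t / c) ^ 2)) * (gd t / c) = Hd t := by
        rw [hHd_apply, ← hsqrt_eq t ht, div_mul_div_comm, one_mul,
          mul_comm (Real.sqrt (1 - (g t / c) ^ 2)) c]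
      rw [← hval]
      exact h3
    have hHdC : ContinuousOn Hd I := by
      apply ContinuousOn.div hgdC
      · exact Real.continuous_sqrt.comp_continuousOn
          (continuousOn_const.sub (hgC.pow 2))
      · intro t ht
        exact ne_of_gt (Real.sqrt_pos.2 (hsub_pos t ht))
    have hHdint : IntervalIntegrable Hd MeasureTheory.volume 0 T := by
      apply ContinuousOn.intervalIntegrable
      rwa [Set.uIcc_of_le hT.le]
    have hFTC : ∫ t in (0:ℝ)..T, Hd t
        = Real.arcsin (g T / c) - Real.arcsin (g 0 / c) := by
      exact intervalIntegral.integral_eq_sub_of_hasDerivAt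
        (f := fun s => Real.arcsin (g s / c))
        (fun t ht => hH t (by rwa [Set.uIcc_of_le hT.le] at ht)) hHdint
    have hbd : ∀ t ∈ I, -Hd t ≤ ‖w t‖ := by
      intro t ht
      have hsp := Real.sqrt_pos.2 (hsub_pos t ht)
      have habs : |Hd t| ≤ ‖w t‖ := by
        rw [hHd_apply, abs_div, abs_of_pos hsp, div_le_iff₀ hsp]
        calc |gd t| ≤ Real.sqrt (1 - g t ^ 2) * ‖w t‖ := hgd_bound t ht
          _ ≤ Real.sqrt (c ^ 2 - g t ^ 2) * ‖w t‖ := by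
              apply mul_le_mul_of_nonneg_right _ (norm_nonneg _)
              apply Real.sqrt_le_sqrt
              nlinarith [hc]
          _ = ‖w t‖ * Real.sqrt (c ^ 2 - g t ^ 2) := mul_comm _ _
      linarith [neg_abs_le (Hd t), abs_nonneg (Hd t)]
    calc Real.arcsin (1/c) - Real.arcsin (g T / c)
        = -(∫ t in (0:ℝ)..T, Hd t) := by rw [hFTC, hg0]; ring
      _ = ∫ t in (0:ℝ)..T, -Hd t := (intervalIntegral.integral_neg).symm
      _ ≤ ∫ t in (0:ℝ)..T, ‖w t‖ := by
          apply intervalIntegral.integral_mono_on hT.le hHdint.neg hwint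
          intro t ht
          exact hbd t ht
  -- limit c → 1⁺
  have hlim : Filter.Tendsto (fun c : ℝ => Real.arcsin (1/c) - Real.arcsin (g T / c))
      (nhdsWithin 1 (Set.Ioi 1)) (nhds (Real.arccos (g T))) := by
    have hca : ContinuousAt (fun c : ℝ => Real.arcsin (1/c) - Real.arcsin (g T / c)) 1 := by
      apply ContinuousAt.sub
      · exact Real.continuous_arcsin.continuousAt.comp
          (continuousAt_const.div continuousAt_id one_ne_zero)
      · exact Real.continuous_arcsin.continuousAt.comp
          (continuousAt_const.div continuousAt_id one_ne_zero)
    have hval : Real.arcsin (1/(1:ℝ)) - Real.arcsin (g T / 1) = Real.arccos (g T) := by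
      simp [Real.arcsin_one, Real.arccos]
    have h2 := hca.continuousWithinAt (s := Set.Ioi 1)
    rw [ContinuousWithinAt] at h2
    simp only [div_one, one_div_one] at h2 hval ⊢
    rw [← hval]
    convert h2 using 2 <;> simp
  exact le_of_tendsto hlim (eventually_mem_nhdsWithin.mono (fun c hc => key c hc))

end Helpers

section MatrixEmbedding

/-- embedding of matrices into Euclidean space -/
def vE {d : ℕ} (A : Matrix (Fin d) (Fin d) ℂ) : EuclideanSpace ℂ (Fin d × Fin d) :=
  (WithLp.equiv 2 ((Fin d × Fin d) → ℂ)).symm (fun p => A p.1 p.2)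

lemma vE_inner {d : ℕ} (A B : Matrix (Fin d) (Fin d) ℂ) :
    (inner ℂ (vE A) (vE B) : ℂ) = hsInner A B := by
  simp only [vE, hsInner, PiLp.inner_apply, RCLike.inner_apply, WithLp.equiv_symm_apply, WithLp.ofLp_toLp,
    Matrix.trace, Matrix.diag, Matrix.mul_apply, Matrix.conjTranspose_apply]
  rw [Fintype.sum_prod_type]
  rw [Finset.sum_comm]
  exact Finset.sum_congr rfl fun _ _ => Finset.sum_congr rfl fun _ _ => mul_comm _ _

lemma vE_norm' {d : ℕ} (A : Matrix (Fin d) (Fin d) ℂ) : hsNorm A = ‖vE A‖ := by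
  have h2 : (inner ℂ (vE A) (vE A) : ℂ).re = ‖vE A‖ ^ 2 := by
    simpa using inner_self_eq_norm_sq (𝕜 := ℂ) (vE A)
  rw [hsNorm, ← hsInner, ← vE_inner, h2, Real.sqrt_sq (norm_nonneg _)]

lemma vE_smul {d : ℕ} (c : ℂ) (A : Matrix (Fin d) (Fin d) ℂ) : vE (c • A) = c • vE A := rfl
lemma vE_add {d : ℕ} (A B : Matrix (Fin d) (Fin d) ℂ) : vE (A + B) = vE A + vE B := rfl
lemma vE_sub {d : ℕ} (A B : Matrix (Fin d) (Fin d) ℂ) : vE (A - B) = vE A - vE B := rfl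
lemma vE_eq_zero {d : ℕ} {A : Matrix (Fin d) (Fin d) ℂ} (h : vE A = 0) : A = 0 := by
  ext i j
  exact congrArg (fun v => v (i, j)) h

lemma hsInner_conj {d : ℕ} {A B : Matrix (Fin d) (Fin d) ℂ} (hA : Aᴴ = A) (hB : Bᴴ = B) :
    (starRingEnd ℂ) (hsInner A B) = hsInner A B := by
  unfold hsInner
  rw [hA]
  calc (starRingEnd ℂ) (A * B).trace = ((A * B)ᴴ).trace := by
        rw [Matrix.trace_conjTranspose]; rfl
    _ = (Bᴴ * Aᴴ).trace := by rw [Matrix.conjTranspose_mul]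
    _ = (Aᴴ * Bᴴ).trace := Matrix.trace_mul_comm _ _
    _ = (A * B).trace := by rw [hA, hB]

lemma hasDerivAt_vE {d : ℕ} (ρ : ℝ → Matrix (Fin d) (Fin d) ℂ)
    (B : Matrix (Fin d) (Fin d) ℂ) (t : ℝ)
    (h : ∀ i j, HasDerivAt (fun s => ρ s i j) (B i j) t) :
    HasDerivAt (fun s => vE (ρ s)) (vE B) t := by
  have hpi : HasDerivAt (fun s => (fun p : Fin d × Fin d => ρ s p.1 p.2))
      (fun p : Fin d × Fin d => B p.1 p.2) t :=
    hasDerivAt_pi.2 fun p => h p.1 p.2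
  exact (((PiLp.continuousLinearEquiv 2 ℂ
      (fun _ : Fin d × Fin d => ℂ)).symm.toContinuousLinearMap.restrictScalars
      ℝ).hasFDerivAt).comp_hasDerivAt t hpi

lemma continuousOn_vE {d : ℕ} (ρ : ℝ → Matrix (Fin d) (Fin d) ℂ) (s : Set ℝ)
    (h : ∀ i j, ContinuousOn (fun t => ρ t i j) s) :
    ContinuousOn (fun t => vE (ρ t)) s := by
  have hpi : ContinuousOn (fun t => (fun p : Fin d × Fin d => ρ t p.1 p.2)) s :=
    continuousOn_pi.2 fun p => h p.1 p.2
  exact ((PiLp.continuousLinearEquiv 2 ℂ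
      (fun _ : Fin d × Fin d => ℂ)).symm.continuous).comp_continuousOn hpi

end MatrixEmbedding

theorem liouville_angle_qsl {d : ℕ} (T : ℝ) (hT : 0 < T)
    (ρ ρ' : ℝ → Matrix (Fin d) (Fin d) ℂ)
    (L : ℝ → Matrix (Fin d) (Fin d) ℂ → Matrix (Fin d) (Fin d) ℂ)
    (hLlin : ∀ t, IsLinearMap ℂ (L t))
    (hne : ∀ t ∈ Set.Icc 0 T, ρ t ≠ 0)
    (hpsd : ∀ t ∈ Set.Icc 0 T, (ρ t).PosSemidef)
    (hderiv : ∀ t ∈ Set.Icc 0 T, ∀ i j, HasDerivAt (fun s => ρ s i j) (ρ' t i j) t)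
    (hcont : ∀ i j, ContinuousOn (fun t => ρ' t i j) (Set.Icc 0 T))
    (heq : ∀ t ∈ Set.Icc 0 T, ρ' t = L t (ρ t)) :
    Real.arccos (((hsNormalize (ρ 0)) * (hsNormalize (ρ T))).trace.re) ≤
      ∫ t in (0:ℝ)..T, fluct (L t) (hsNormalize (ρ t)) := by
  have hI0 : (0:ℝ) ∈ Set.Icc (0:ℝ) T := Set.left_mem_Icc.2 hT.le
  have hIT : T ∈ Set.Icc (0:ℝ) T := Set.right_mem_Icc.2 hT.le
  have hd : ∀ t ∈ Set.Icc (0:ℝ) T, HasDerivAt (fun s => vE (ρ s)) (vE (ρ' t)) t :=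
    fun t ht => hasDerivAt_vE ρ (ρ' t) t (fun i j => hderiv t ht i j)
  have hcont' : ContinuousOn (fun t => vE (ρ' t)) (Set.Icc 0 T) := continuousOn_vE ρ' _ hcont
  have hne' : ∀ t ∈ Set.Icc (0:ℝ) T, vE (ρ t) ≠ 0 := fun t ht h => hne t ht (vE_eq_zero h)
  have hcurve := curve_qsl T hT (fun t => vE (ρ t)) (fun t => vE (ρ' t)) hd hcont' hne'
  have hnorm : ∀ t, hsNorm (ρ t) = ‖vE (ρ t)‖ := fun t => vE_norm' (ρ t)
  have hnmlz : ∀ t, vE (hsNormalize (ρ t)) = ‖vE (ρ t)‖⁻¹ • vE (ρ t) := by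
    intro t
    rw [hsNormalize, vE_smul, hnorm t, ← Complex.ofReal_inv, Complex.coe_smul]
  have hHerm : ∀ t ∈ Set.Icc (0:ℝ) T, (ρ t)ᴴ = ρ t := fun t ht => (hpsd t ht).1
  have hHerm' : ∀ t ∈ Set.Icc (0:ℝ) T, (ρ' t)ᴴ = ρ' t := by
    intro t ht
    ext i j
    rw [Matrix.conjTranspose_apply]
    have h1 : HasDerivWithinAt (fun s => ρ s i j) (ρ' t i j) (Set.Icc 0 T) t :=
      (hderiv t ht i j).hasDerivWithinAt
    have h2 : HasDerivAt (fun s => star (ρ s j i)) (star (ρ' t j i)) t :=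
      (hderiv t ht j i).star
    have h3 : HasDerivWithinAt (fun s => ρ s i j) (star (ρ' t j i)) (Set.Icc 0 T) t := by
      apply h2.hasDerivWithinAt.congr
      · intro s hs
        conv_lhs => rw [← hHerm s hs]
        rw [Matrix.conjTranspose_apply]
      · conv_lhs => rw [← hHerm t ht]
        rw [Matrix.conjTranspose_apply]
    exact (uniqueDiffOn_Icc hT t ht).eq_deriv _ h3 h1
  have hnmlzHerm : ∀ t ∈ Set.Icc (0:ℝ) T, (hsNormalize (ρ t))ᴴ = hsNormalize (ρ t) := by
    intro t ht
    rw [hsNormalize, Matrix.conjTranspose_smul, hHerm t ht]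
    congr 1
    simp [Complex.star_def, map_inv₀, Complex.conj_ofReal]
  have hLHS : ((hsNormalize (ρ 0)) * (hsNormalize (ρ T))).trace.re
      = (inner ℂ (‖vE (ρ 0)‖⁻¹ • vE (ρ 0)) (‖vE (ρ T)‖⁻¹ • vE (ρ T)) : ℂ).re := by
    rw [← hnmlz 0, ← hnmlz T, vE_inner, hsInner, hnmlzHerm 0 hI0]
  have hinteg : ∀ t ∈ Set.uIcc (0:ℝ) T, fluct (L t) (hsNormalize (ρ t)) =
      Real.sqrt ((‖(‖vE (ρ t)‖⁻¹ • vE (ρ' t) : EuclideanSpace ℂ (Fin d × Fin d))‖) ^ 2 -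
        ((inner ℂ ((‖vE (ρ t)‖⁻¹ • vE (ρ t) : EuclideanSpace ℂ (Fin d × Fin d)))
          ((‖vE (ρ t)‖⁻¹ • vE (ρ' t) : EuclideanSpace ℂ (Fin d × Fin d))) : ℂ).re) ^ 2) := by
    intro t ht'
    rw [Set.uIcc_of_le hT.le] at ht'
    have ht := ht'
    have hLψ : L t (hsNormalize (ρ t)) = (hsNorm (ρ t) : ℂ)⁻¹ • ρ' t := by
      rw [hsNormalize, (hLlin t).map_smul, ← heq t ht]
    have hBH : ((hsNorm (ρ t) : ℂ)⁻¹ • ρ' t)ᴴ = (hsNorm (ρ t) : ℂ)⁻¹ • ρ' t := by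
      rw [Matrix.conjTranspose_smul, hHerm' t ht]
      congr 1
      simp [Complex.star_def, map_inv₀, Complex.conj_ofReal]
    have him : (hsInner (hsNormalize (ρ t)) (L t (hsNormalize (ρ t)))).im = 0 := by
      rw [hLψ]
      exact Complex.conj_eq_iff_im.1 (hsInner_conj (hnmlzHerm t ht) hBH)
    have hvy : vE (L t (hsNormalize (ρ t))) = ‖vE (ρ t)‖⁻¹ • vE (ρ' t) := by
      rw [hLψ, vE_smul, hnorm t, ← Complex.ofReal_inv, Complex.coe_smul]
    have e1 : hsNorm (L t (hsNormalize (ρ t))) = ‖(‖vE (ρ t)‖⁻¹ • vE (ρ' t) :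
        EuclideanSpace ℂ (Fin d × Fin d))‖ := by
      rw [vE_norm', hvy]
    have e2 : hsInner (hsNormalize (ρ t)) (L t (hsNormalize (ρ t)))
        = (inner ℂ ((‖vE (ρ t)‖⁻¹ • vE (ρ t) : EuclideanSpace ℂ (Fin d × Fin d)))
          ((‖vE (ρ t)‖⁻¹ • vE (ρ' t) : EuclideanSpace ℂ (Fin d × Fin d))) : ℂ) := by
      rw [← vE_inner, hnmlz t, hvy]
    have e3 : (‖hsInner (hsNormalize (ρ t)) (L t (hsNormalize (ρ t)))‖) ^ 2
        = ((hsInner (hsNormalize (ρ t)) (L t (hsNormalize (ρ t)))).re) ^ 2 := by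
      rw [Complex.sq_norm, Complex.normSq_apply, him]
      ring
    rw [fluct, e3, e1, e2]
  rw [hLHS, intervalIntegral.integral_congr hinteg]
  exact hcurve
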